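/- The set E of real numbers α > 1 such that the sequence of fractional parts ({α^n})_{n≥1} is not dense in [0,1] has Hausdorff dimension 1. -/

import Mathlib

open MeasureTheory
open scoped NNReal ENNReal

namespace Stmt17



/-- Two reals with small fractional parts that are close have equal floors. -/
lemma floor_eq_of_fract {x y : ℝ} (hx : Int.fract x ≤ 1 / 2) (hy : Int.fract y ≤ 1 / 2)
    (h : |x - y| < 1 / 2) : ⌊x⌋ = ⌊y⌋ := by
  have hfx : (0 : ℝ) ≤ Int.fract x := Int.fract_nonneg x
  have hfy : (0 : ℝ) ≤ Int.fract y := Int.fract_nonneg y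
  have h1 : |(⌊x⌋ : ℝ) - ⌊y⌋| < 1 := by
    have hx' : (⌊x⌋ : ℝ) = x - Int.fract x := by rw [Int.self_sub_fract]
    have hy' : (⌊y⌋ : ℝ) = y - Int.fract y := by rw [Int.self_sub_fract]
    rw [hx', hy']
    have : x - Int.fract x - (y - Int.fract y) = (x - y) + (Int.fract y - Int.fract x) := by ring
    rw [this]
    calc |x - y + (Int.fract y - Int.fract x)| ≤ |x - y| + |Int.fract y - Int.fract x| :=
          abs_add_le _ _
      _ < 1 / 2 + 1 / 2 := by
          apply add_lt_add_of_lt_of_le h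
          rw [abs_sub_le_iff]; constructor <;> linarith
      _ = 1 := by norm_num
  have h2 : |⌊x⌋ - ⌊y⌋| < 1 := by
    have := h1
    rw [show ((⌊x⌋ : ℝ) - ⌊y⌋) = ((⌊x⌋ - ⌊y⌋ : ℤ) : ℝ) by push_cast; ring] at this
    exact_mod_cast this
  have h3 : ⌊x⌋ - ⌊y⌋ = 0 := by
    rw [abs_lt] at h2
    omega
  omega

/-- Lipschitz-type bound for powers on a bounded set. -/
lemma abs_pow_sub_pow_le {R x y : ℝ} (hx : |x| ≤ R) (hy : |y| ≤ R) (m : ℕ) :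
    |x ^ (m + 1) - y ^ (m + 1)| ≤ (m + 1) * R ^ m * |x - y| := by
  have hR : 0 ≤ R := le_trans (abs_nonneg x) hx
  have key := geom_sum₂_mul x y (m + 1)
  rw [← key, abs_mul]
  apply mul_le_mul_of_nonneg_right _ (abs_nonneg _)
  calc |∑ i ∈ Finset.range (m + 1), x ^ i * y ^ (m + 1 - 1 - i)|
      ≤ ∑ i ∈ Finset.range (m + 1), |x ^ i * y ^ (m + 1 - 1 - i)| :=
        Finset.abs_sum_le_sum_abs _ _
    _ ≤ ∑ _i ∈ Finset.range (m + 1), R ^ m := by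
        apply Finset.sum_le_sum
        intro i hi
        rw [Finset.mem_range] at hi
        have hi' : i ≤ m := Nat.lt_succ_iff.mp hi
        rw [abs_mul, abs_pow, abs_pow]
        calc |x| ^ i * |y| ^ (m + 1 - 1 - i) ≤ R ^ i * R ^ (m + 1 - 1 - i) := by
              apply mul_le_mul (pow_le_pow_left₀ (abs_nonneg _) hx i)
                (pow_le_pow_left₀ (abs_nonneg _) hy _) (pow_nonneg (abs_nonneg _) _)
                (pow_nonneg hR _)
          _ = R ^ m := by
              rw [← pow_add]
              congr 1
              omega
    _ = (m + 1) * R ^ m := by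
        rw [Finset.sum_const, Finset.card_range, nsmul_eq_mul]
        push_cast; ring

noncomputable def digs (B : ℕ) (α : ℝ) (n : ℕ) : ℤ := ⌊α ^ (n + 2)⌋ % B

noncomputable def ff (B : ℕ) (α : ℝ) : ℝ := ∑' n : ℕ, (digs B α n : ℝ) / (B : ℝ) ^ (n + 1)

def Eset (M : ℕ) : Set ℝ :=
  {α | α ∈ Set.Icc (M : ℝ) (M + 1) ∧ ∀ j : ℕ, 1 ≤ j → Int.fract (α ^ j) ≤ 1 / 2}

lemma digs_nonneg {B : ℕ} (hB : 0 < B) (α : ℝ) (n : ℕ) : 0 ≤ digs B α n :=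
  Int.emod_nonneg _ (by exact_mod_cast hB.ne')

lemma digs_lt {B : ℕ} (hB : 0 < B) (α : ℝ) (n : ℕ) : digs B α n < B :=
  Int.emod_lt_of_pos _ (by exact_mod_cast hB)

lemma summable_ff {B : ℕ} (hB : 2 ≤ B) (α : ℝ) :
    Summable (fun n : ℕ => (digs B α n : ℝ) / (B : ℝ) ^ (n + 1)) := by
  have hB0 : (0:ℝ) < B := by exact_mod_cast (by omega : 0 < B)
  apply Summable.of_nonneg_of_le
  · intro n
    apply div_nonneg _ (by positivity)
    exact_mod_cast digs_nonneg (by omega) α n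
  · intro n
    show (digs B α n : ℝ) / (B : ℝ) ^ (n + 1) ≤ (B:ℝ) * ((B:ℝ)⁻¹) ^ n
    have hgeq : (B:ℝ) * ((B:ℝ)⁻¹)^n = (B:ℝ)/(B:ℝ)^n := by
      rw [inv_pow]; ring
    rw [hgeq]
    have h1 : ((digs B α n : ℝ)) ≤ (B:ℝ) := by exact_mod_cast (digs_lt (by omega) α n).le
    have h2 : (B:ℝ)^n ≤ (B:ℝ)^(n+1) := by
      apply pow_le_pow_right₀ (by exact_mod_cast (by omega : 1 ≤ B)) (by omega)
    exact div_le_div₀ (by positivity) h1 (by positivity) h2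
  · exact (summable_geometric_of_lt_one (by positivity)
      (by rw [inv_lt_one_iff₀]; right; exact_mod_cast (by omega : 1 < B))).mul_left _


lemma pow_rpow_comm {x : ℝ} (hx : 0 ≤ x) (k : ℕ) (θ : ℝ) : (x ^ k) ^ θ = (x ^ θ) ^ k := by
  rw [← Real.rpow_natCast x k, ← Real.rpow_mul hx, mul_comm, Real.rpow_mul hx, Real.rpow_natCast]

lemma summable_aux {q : ℝ} (h0 : 0 ≤ q) (h1 : q < 1) :
    Summable fun n : ℕ => ((n : ℝ) + 2) * q ^ (n + 1) := by
  have hq : ‖q‖ < 1 := by rwa [Real.norm_eq_abs, abs_of_nonneg h0]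
  have s1 : Summable fun n : ℕ => q * ((n : ℝ) ^ 1 * q ^ n) :=
    (summable_pow_mul_geometric_of_norm_lt_one 1 hq).mul_left q
  have s2 : Summable fun n : ℕ => (2 * q) * q ^ n :=
    (summable_geometric_of_lt_one h0 h1).mul_left (2 * q)
  apply (s1.add s2).congr
  intro n
  ring


-- placeholders from previous chunks
lemma term_bound {B M : ℕ} (hB : 2 ≤ B) {θ : ℝ} (hθ0 : 0 < θ) (hθ1 : θ ≤ 1)
    {α β : ℝ} (hα : α ∈ Eset M) (hβ : β ∈ Eset M) (n : ℕ) :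
    |(digs B α n : ℝ) - (digs B β n : ℝ)| / (B : ℝ) ^ (n + 1) ≤
      (2 * B * |α - β| ^ θ) * (((n : ℝ) + 2) * ((((M : ℝ) + 1) ^ θ / B) ^ (n + 1))) := by
  have hB0 : (0 : ℝ) < B := by exact_mod_cast (by omega : 0 < B)
  have hM0 : (0 : ℝ) ≤ (M : ℝ) := Nat.cast_nonneg M
  have hMθ : (0 : ℝ) ≤ ((M : ℝ) + 1) ^ θ := Real.rpow_nonneg (by linarith) θ
  have htθ : (0 : ℝ) ≤ |α - β| ^ θ := Real.rpow_nonneg (abs_nonneg _) θ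
  by_cases hd : digs B α n = digs B β n
  · rw [hd, sub_self, abs_zero, zero_div]
    positivity
  · -- floors differ
    have hfl : ⌊α ^ (n + 2)⌋ ≠ ⌊β ^ (n + 2)⌋ := by
      intro h; exact hd (by simp [digs, h])
    have hfar : (1 : ℝ) / 2 ≤ |α ^ (n + 2) - β ^ (n + 2)| := by
      by_contra hcon
      push_neg at hcon
      exact hfl (floor_eq_of_fract (hα.2 (n + 2) (by omega)) (hβ.2 (n + 2) (by omega)) hcon)
    have habsα : |α| ≤ (M : ℝ) + 1 := by
      rw [abs_of_nonneg (le_trans hM0 hα.1.1)]; exact hα.1.2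
    have habsβ : |β| ≤ (M : ℝ) + 1 := by
      rw [abs_of_nonneg (le_trans hM0 hβ.1.1)]; exact hβ.1.2
    have hlip : |α ^ (n + 2) - β ^ (n + 2)| ≤
        ((n : ℝ) + 2) * ((M : ℝ) + 1) ^ (n + 1) * |α - β| := by
      have := abs_pow_sub_pow_le habsα habsβ (n + 1)
      convert this using 3 <;> push_cast <;> ring
    set z : ℝ := 2 * ((n : ℝ) + 2) * ((M : ℝ) + 1) ^ (n + 1) * |α - β| with hz_def
    have hz1 : (1 : ℝ) ≤ z := by
      have : (1 : ℝ) / 2 ≤ ((n : ℝ) + 2) * ((M : ℝ) + 1) ^ (n + 1) * |α - β| :=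
        le_trans hfar hlip
      rw [hz_def]; linarith
    have hzθ1 : (1 : ℝ) ≤ z ^ θ := by
      rw [← Real.one_rpow θ]
      exact Real.rpow_le_rpow zero_le_one hz1 hθ0.le
    -- z ^ θ ≤ 2 * (n+2) * ((M+1)^θ)^(n+1) * |α-β|^θ
    have hzθ : z ^ θ ≤ 2 * ((n : ℝ) + 2) * ((((M : ℝ) + 1) ^ θ) ^ (n + 1)) * |α - β| ^ θ := by
      have e1 : z ^ θ = (2 * ((n : ℝ) + 2)) ^ θ * (((M : ℝ) + 1) ^ (n + 1)) ^ θ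
          * |α - β| ^ θ := by
        rw [hz_def, Real.mul_rpow (by positivity) (abs_nonneg _),
          Real.mul_rpow (by positivity) (by positivity)]
      rw [e1]
      have e2 : (2 * ((n : ℝ) + 2)) ^ θ ≤ 2 * ((n : ℝ) + 2) := by
        nth_rewrite 2 [← Real.rpow_one (2 * ((n : ℝ) + 2))]
        exact Real.rpow_le_rpow_of_exponent_le (by linarith [Nat.cast_nonneg (α := ℝ) n]) hθ1
      have e3 : (((M : ℝ) + 1) ^ (n + 1) : ℝ) ^ θ = ((((M : ℝ) + 1) ^ θ) ^ (n + 1)) :=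
        pow_rpow_comm (by linarith) (n + 1) θ
      rw [e3]
      apply mul_le_mul_of_nonneg_right _ htθ
      exact mul_le_mul_of_nonneg_right e2 (by positivity)
    -- left side bound
    have hdig : |(digs B α n : ℝ) - (digs B β n : ℝ)| ≤ (B : ℝ) := by
      have h1 := digs_nonneg (B := B) (by omega) α n
      have h2 := digs_lt (B := B) (by omega) α n
      have h3 := digs_nonneg (B := B) (by omega) β n
      have h4 := digs_lt (B := B) (by omega) β n
      rw [show ((digs B α n : ℝ) - (digs B β n : ℝ)) = ((digs B α n - digs B β n : ℤ) : ℝ) by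
        push_cast; ring]
      rw [← Int.cast_abs]
      exact_mod_cast (by rw [abs_le]; omega : |digs B α n - digs B β n| ≤ (B : ℤ))
    calc |(digs B α n : ℝ) - (digs B β n : ℝ)| / (B : ℝ) ^ (n + 1)
        ≤ (B : ℝ) / (B : ℝ) ^ (n + 1) := by gcongr
      _ ≤ (B : ℝ) / (B : ℝ) ^ (n + 1) * z ^ θ := by
          nth_rewrite 1 [← mul_one ((B : ℝ) / (B : ℝ) ^ (n + 1))]
          exact mul_le_mul_of_nonneg_left hzθ1 (by positivity)
      _ ≤ (B : ℝ) / (B : ℝ) ^ (n + 1) *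
          (2 * ((n : ℝ) + 2) * ((((M : ℝ) + 1) ^ θ) ^ (n + 1)) * |α - β| ^ θ) := by
          exact mul_le_mul_of_nonneg_left hzθ (by positivity)
      _ = (2 * B * |α - β| ^ θ) * (((n : ℝ) + 2) * ((((M : ℝ) + 1) ^ θ / B) ^ (n + 1))) := by
          rw [div_pow]
          field_simp

lemma dist_ff_le {B M : ℕ} (hB : 2 ≤ B) {θ : ℝ} (hθ0 : 0 < θ) (hθ1 : θ ≤ 1)
    (hq : ((M : ℝ) + 1) ^ θ < B)
    {α β : ℝ} (hα : α ∈ Eset M) (hβ : β ∈ Eset M) :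
    dist (ff B α) (ff B β) ≤
      (2 * B * ∑' n : ℕ, (((n : ℝ) + 2) * ((((M : ℝ) + 1) ^ θ / B) ^ (n + 1)))) *
        dist α β ^ θ := by
  have hB0 : (0 : ℝ) < B := by exact_mod_cast (by omega : 0 < B)
  set q : ℝ := ((M : ℝ) + 1) ^ θ / B with hq_def
  have hq0 : 0 ≤ q := div_nonneg (Real.rpow_nonneg (by positivity) θ) hB0.le
  have hq1 : q < 1 := (div_lt_one hB0).mpr hq
  have hsq : Summable fun n : ℕ => ((n : ℝ) + 2) * q ^ (n + 1) := summable_aux hq0 hq1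
  set D : ℝ := 2 * B * |α - β| ^ θ with hD_def
  have hD0 : 0 ≤ D := by
    apply mul_nonneg (by positivity) (Real.rpow_nonneg (abs_nonneg _) θ)
  set c : ℕ → ℝ := fun n => ((digs B α n : ℝ) - (digs B β n : ℝ)) / (B : ℝ) ^ (n + 1) with hc
  have hcabs : ∀ n, |c n| = |(digs B α n : ℝ) - (digs B β n : ℝ)| / (B : ℝ) ^ (n + 1) := by
    intro n
    rw [hc]
    rw [abs_div, abs_of_pos (by positivity : (0:ℝ) < (B : ℝ) ^ (n + 1))]
  have hterm : ∀ n, |c n| ≤ D * (((n : ℝ) + 2) * q ^ (n + 1)) := by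
    intro n
    rw [hcabs n, hD_def]
    have := term_bound (M := M) hB hθ0 hθ1 hα hβ n
    rw [mul_assoc] at this ⊢
    exact this
  have hsumc : Summable fun n => |c n| :=
    Summable.of_nonneg_of_le (fun n => abs_nonneg _) hterm (hsq.mul_left D)
  have hsumc' : Summable c := hsumc.of_abs
  have h1 : ff B α - ff B β = ∑' n, c n := by
    rw [ff, ff, ← Summable.tsum_sub (summable_ff hB α) (summable_ff hB β)]
    congr 1
    funext n
    show _ = ((digs B α n : ℝ) - (digs B β n : ℝ)) / (B : ℝ) ^ (n + 1)
    rw [sub_div]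
  rw [Real.dist_eq, Real.dist_eq, h1]
  calc |∑' n, c n| ≤ ∑' n, |c n| := by
        have := norm_tsum_le_tsum_norm (f := c) (by simpa [Real.norm_eq_abs] using hsumc)
        simpa [Real.norm_eq_abs] using this
    _ ≤ ∑' n : ℕ, D * (((n : ℝ) + 2) * q ^ (n + 1)) := Summable.tsum_le_tsum hterm hsumc (hsq.mul_left D)
    _ = D * ∑' n : ℕ, (((n : ℝ) + 2) * q ^ (n + 1)) := tsum_mul_left
    _ = (2 * B * ∑' n : ℕ, (((n : ℝ) + 2) * q ^ (n + 1))) * |α - β| ^ θ := by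
        rw [hD_def]; ring

lemma rpow_inv_pow {z : ℝ} (hz : 0 ≤ z) (k m : ℕ) :
    (z ^ (((k : ℕ) : ℝ))⁻¹) ^ m = z ^ ((m : ℝ) / k) := by
  rw [← Real.rpow_natCast (z ^ (((k : ℕ) : ℝ))⁻¹) m, ← Real.rpow_mul hz]
  congr 1
  rw [div_eq_mul_inv, mul_comm]

noncomputable def Jfun (B M : ℕ) (e : ℕ → ℤ) : ℕ → ℤ
  | 0 => (M : ℤ)
  | n + 1 => e n + B * ⌈(((Jfun B M e n : ℝ)) ^ ((((n + 2 : ℕ)) : ℝ) / ((n + 1 : ℕ) : ℝ))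
      - (e n : ℝ)) / (B : ℝ)⌉

section Construction

variable {B M : ℕ} (hB : 2 ≤ B) (hM : 2 * B + 1 ≤ M) (e : ℕ → ℤ)
  (he : ∀ n, 0 ≤ e n ∧ e n < B)

-- abbreviations
noncomputable def xv (B M : ℕ) (e : ℕ → ℤ) (n : ℕ) : ℝ :=
  ((Jfun B M e n : ℝ)) ^ ((((n + 2 : ℕ)) : ℝ) / ((n + 1 : ℕ) : ℝ))
noncomputable def yv (B M : ℕ) (e : ℕ → ℤ) (n : ℕ) : ℝ :=
  ((Jfun B M e n : ℝ) + 1 / 2) ^ ((((n + 2 : ℕ)) : ℝ) / ((n + 1 : ℕ) : ℝ))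
noncomputable def av (B M : ℕ) (e : ℕ → ℤ) (n : ℕ) : ℝ :=
  ((Jfun B M e n : ℝ)) ^ (((n + 1 : ℕ) : ℝ))⁻¹
noncomputable def bv (B M : ℕ) (e : ℕ → ℤ) (n : ℕ) : ℝ :=
  ((Jfun B M e n : ℝ) + 1 / 2) ^ (((n + 1 : ℕ) : ℝ))⁻¹

include hB hM in
lemma Jfun_ge (n : ℕ) : ((M : ℤ) ^ (n + 1)) ≤ Jfun B M e n := by
  induction n with
  | zero => simp [Jfun]
  | succ n ih =>
    have hB0 : (0 : ℝ) < B := by exact_mod_cast (by omega : 0 < B)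
    have hMpos : (0 : ℝ) ≤ (M : ℝ) := Nat.cast_nonneg M
    have hJ0 : (0 : ℝ) ≤ (Jfun B M e n : ℝ) := by
      have : (0 : ℤ) ≤ (M : ℤ) ^ (n + 1) := by positivity
      exact_mod_cast le_trans this ih
    have hxge : xv B M e n ≤ (Jfun B M e (n + 1) : ℝ) := by
      show xv B M e n ≤ ((e n + B * ⌈(xv B M e n - (e n : ℝ)) / (B : ℝ)⌉ : ℤ) : ℝ)
      push_cast
      have := Int.le_ceil ((xv B M e n - (e n : ℝ)) / (B : ℝ))
      have h2 : (xv B M e n - (e n : ℝ)) / (B : ℝ) * B ≤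
          (⌈(xv B M e n - (e n : ℝ)) / (B : ℝ)⌉ : ℝ) * B :=
        mul_le_mul_of_nonneg_right this hB0.le
      rw [div_mul_cancel₀ _ hB0.ne'] at h2
      linarith
    have hxM : ((M : ℝ) ^ (n + 2)) ≤ xv B M e n := by
      have hih : ((M : ℝ) ^ (n + 1)) ≤ (Jfun B M e n : ℝ) := by exact_mod_cast ih
      have h1 : ((M : ℝ) ^ (n + 1)) ^ ((((n + 2 : ℕ)) : ℝ) / ((n + 1 : ℕ) : ℝ)) ≤
          xv B M e n :=
        Real.rpow_le_rpow (by positivity) hih (by positivity)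
      have h2 : ((M : ℝ) ^ (n + 1)) ^ ((((n + 2 : ℕ)) : ℝ) / ((n + 1 : ℕ) : ℝ)) =
          (M : ℝ) ^ (n + 2) := by
        rw [← Real.rpow_natCast (M : ℝ) (n + 1), ← Real.rpow_mul hMpos,
          ← Real.rpow_natCast (M : ℝ) (n + 2)]
        congr 1
        have : ((n + 1 : ℕ) : ℝ) ≠ 0 := by positivity
        field_simp
      rw [h2] at h1
      exact h1
    have : ((M : ℝ) ^ (n + 2)) ≤ (Jfun B M e (n + 1) : ℝ) := le_trans hxM hxge
    exact_mod_cast this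

end Construction


section C2
variable {B M : ℕ} (hB : 2 ≤ B) (hM : 2 * B + 1 ≤ M) (e : ℕ → ℤ)
  (he : ∀ n, 0 ≤ e n ∧ e n < B)

include hB hM in
lemma Jfun_one_le (n : ℕ) : (1 : ℝ) ≤ (Jfun B M e n : ℝ) := by
  have h := Jfun_ge hB hM e n
  have : (1 : ℤ) ≤ (M : ℤ) ^ (n + 1) := one_le_pow₀ (by exact_mod_cast (by omega : 1 ≤ M))
  exact_mod_cast le_trans this h

include hB hM in
lemma Jfun_le_x (n : ℕ) : (Jfun B M e (n + 1) : ℝ) ≤ xv B M e n + B := by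
  have hB0 : (0 : ℝ) < B := by exact_mod_cast (by omega : 0 < B)
  show ((e n + B * ⌈(xv B M e n - (e n : ℝ)) / (B : ℝ)⌉ : ℤ) : ℝ) ≤ _
  push_cast
  have h1 : (⌈(xv B M e n - (e n : ℝ)) / (B : ℝ)⌉ : ℝ) <
      (xv B M e n - (e n : ℝ)) / (B : ℝ) + 1 := Int.ceil_lt_add_one _
  have h2 : (B : ℝ) * (⌈(xv B M e n - (e n : ℝ)) / (B : ℝ)⌉ : ℝ) ≤
      (B : ℝ) * ((xv B M e n - (e n : ℝ)) / (B : ℝ) + 1) :=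
    mul_le_mul_of_nonneg_left h1.le hB0.le
  rw [mul_add, mul_div_cancel₀ _ hB0.ne'] at h2
  linarith

include hB hM in
lemma x_ge (n : ℕ) : xv B M e n ≤ (Jfun B M e (n + 1) : ℝ) := by
  have hB0 : (0 : ℝ) < B := by exact_mod_cast (by omega : 0 < B)
  show xv B M e n ≤ ((e n + B * ⌈(xv B M e n - (e n : ℝ)) / (B : ℝ)⌉ : ℤ) : ℝ)
  push_cast
  have := Int.le_ceil ((xv B M e n - (e n : ℝ)) / (B : ℝ))
  have h2 : (xv B M e n - (e n : ℝ)) / (B : ℝ) * B ≤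
      (⌈(xv B M e n - (e n : ℝ)) / (B : ℝ)⌉ : ℝ) * B :=
    mul_le_mul_of_nonneg_right this hB0.le
  rw [div_mul_cancel₀ _ hB0.ne'] at h2
  linarith

include hB hM in
lemma aM_le (n : ℕ) : (M : ℝ) ≤ av B M e n := by
  have hMpos : (0 : ℝ) ≤ (M : ℝ) := Nat.cast_nonneg M
  have h1 : ((M : ℝ) ^ (n + 1)) ≤ (Jfun B M e n : ℝ) := by
    exact_mod_cast Jfun_ge hB hM e n
  calc (M : ℝ) = ((M : ℝ) ^ (n + 1)) ^ ((((n + 1 : ℕ)) : ℝ))⁻¹ :=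
        (Real.pow_rpow_inv_natCast hMpos (by omega)).symm
    _ ≤ av B M e n := Real.rpow_le_rpow (by positivity) h1 (by positivity)

include hB hM in
lemma ab_facts (n : ℕ) :
    av B M e n ^ (n + 1) = (Jfun B M e n : ℝ) ∧
    bv B M e n ^ (n + 1) = (Jfun B M e n : ℝ) + 1 / 2 ∧
    av B M e n ^ (n + 2) = xv B M e n ∧
    bv B M e n ^ (n + 2) = yv B M e n ∧
    av B M e n ≤ bv B M e n := by
  have hJ1 : (1 : ℝ) ≤ (Jfun B M e n : ℝ) := Jfun_one_le hB hM e n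
  have hJ0 : (0 : ℝ) ≤ (Jfun B M e n : ℝ) := by linarith
  have hJ0' : (0 : ℝ) ≤ (Jfun B M e n : ℝ) + 1 / 2 := by linarith
  refine ⟨?_, ?_, ?_, ?_, ?_⟩
  · exact Real.rpow_inv_natCast_pow hJ0 (by omega)
  · exact Real.rpow_inv_natCast_pow hJ0' (by omega)
  · exact rpow_inv_pow hJ0 (n + 1) (n + 2)
  · exact rpow_inv_pow hJ0' (n + 1) (n + 2)
  · exact Real.rpow_le_rpow hJ0 (by linarith) (by positivity)

include hB hM in
lemma Jfun_succ_le (n : ℕ) : (Jfun B M e (n + 1) : ℝ) + 1 / 2 ≤ yv B M e n := by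
  obtain ⟨ha1, hb1, hx, hy, hab⟩ := ab_facts hB hM e n
  have hJ1 : (1 : ℝ) ≤ (Jfun B M e n : ℝ) := Jfun_one_le hB hM e n
  have haM : (M : ℝ) ≤ av B M e n := aM_le hB hM e n
  have hM5 : (5 : ℝ) ≤ (M : ℝ) := by exact_mod_cast (by omega : 5 ≤ M)
  have ha0 : (0 : ℝ) ≤ av B M e n := by linarith
  have hyx : av B M e n / 2 ≤ yv B M e n - xv B M e n := by
    have e1 : xv B M e n = av B M e n ^ (n + 1) * av B M e n := by
      rw [← hx, pow_succ]
    have e2 : yv B M e n = bv B M e n ^ (n + 1) * bv B M e n := by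
      rw [← hy, pow_succ]
    rw [e1, e2, ha1, hb1]
    nlinarith [hJ1, hab, ha0]
  have hJB : (Jfun B M e (n + 1) : ℝ) ≤ xv B M e n + B := Jfun_le_x hB hM e n
  have hBM : (2 : ℝ) * B + 1 ≤ (M : ℝ) := by exact_mod_cast hM
  linarith

include hB hM in
lemma av_mono : Monotone (av B M e) := by
  apply monotone_nat_of_le_succ
  intro n
  have hJ0 : (0 : ℝ) ≤ (Jfun B M e n : ℝ) := by linarith [Jfun_one_le hB hM e n]
  have hx0 : (0 : ℝ) ≤ xv B M e n := Real.rpow_nonneg hJ0 _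
  have h1 : xv B M e n ^ ((((n + 2 : ℕ)) : ℝ))⁻¹ ≤ av B M e (n + 1) :=
    Real.rpow_le_rpow hx0 (x_ge hB hM e n) (by positivity)
  have h2 : xv B M e n ^ ((((n + 2 : ℕ)) : ℝ))⁻¹ = av B M e n := by
    rw [xv, av, ← Real.rpow_mul hJ0]
    congr 1
    have c1 : ((n + 1 : ℕ) : ℝ) ≠ 0 := by positivity
    have c2 : ((n + 2 : ℕ) : ℝ) ≠ 0 := by positivity
    field_simp
  rw [h2] at h1
  exact h1

include hB hM in
lemma bv_anti : Antitone (bv B M e) := by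
  apply antitone_nat_of_succ_le
  intro n
  have hJ0' : (0 : ℝ) ≤ (Jfun B M e n : ℝ) + 1 / 2 := by linarith [Jfun_one_le hB hM e n]
  have hJ10 : (0 : ℝ) ≤ (Jfun B M e (n + 1) : ℝ) + 1 / 2 := by
    linarith [Jfun_one_le hB hM e (n + 1)]
  have h1 : bv B M e (n + 1) ≤ yv B M e n ^ ((((n + 2 : ℕ)) : ℝ))⁻¹ :=
    Real.rpow_le_rpow hJ10 (Jfun_succ_le hB hM e n) (by positivity)
  have h2 : yv B M e n ^ ((((n + 2 : ℕ)) : ℝ))⁻¹ = bv B M e n := by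
    rw [yv, bv, ← Real.rpow_mul hJ0']
    congr 1
    have c1 : ((n + 1 : ℕ) : ℝ) ≠ 0 := by positivity
    have c2 : ((n + 2 : ℕ) : ℝ) ≠ 0 := by positivity
    field_simp
  rw [h2] at h1
  exact h1

end C2

section C3
variable {B M : ℕ} (hB : 2 ≤ B) (hM : 2 * B + 1 ≤ M) (e : ℕ → ℤ)
  (he : ∀ n, 0 ≤ e n ∧ e n < B)


include hB hM he in
lemma exists_alpha : ∃ α ∈ Eset M, ∀ n, digs B α n = e n := by
  classical
  set a := av B M e with ha_def
  set b := bv B M e with hb_def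
  have hab : ∀ n, a n ≤ b n := fun n => (ab_facts hB hM e n).2.2.2.2
  have hmono : Monotone a := av_mono hB hM e
  have hanti : Antitone b := bv_anti hB hM e
  have hbound : ∀ m, a m ≤ b 0 := fun m => le_trans (hab m) (hanti (Nat.zero_le m))
  have hbdd : BddAbove (Set.range a) := ⟨b 0, by rintro x ⟨m, rfl⟩; exact hbound m⟩
  set α := ⨆ n, a n with hα_def
  have hαa : ∀ n, a n ≤ α := fun n => le_ciSup hbdd n
  have hαb : ∀ n, α ≤ b n := by
    intro n
    apply ciSup_le
    intro m
    rcases le_total m n with h | h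
    · exact le_trans (hmono h) (hab n)
    · exact le_trans (hab m) (hanti h)
  have hM5 : (5 : ℝ) ≤ (M : ℝ) := by exact_mod_cast (by omega : 5 ≤ M)
  have ha0 : ∀ n, (0 : ℝ) ≤ a n := fun n => le_trans (by linarith) (aM_le hB hM e n)
  have hα0 : (0 : ℝ) ≤ α := le_trans (ha0 0) (hαa 0)
  -- power bounds
  have hpow : ∀ n : ℕ, (Jfun B M e n : ℝ) ≤ α ^ (n + 1) ∧
      α ^ (n + 1) ≤ (Jfun B M e n : ℝ) + 1 / 2 := by
    intro n
    obtain ⟨ha1, hb1, -, -, -⟩ := ab_facts hB hM e n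
    constructor
    · rw [← ha1]
      exact pow_le_pow_left₀ (ha0 n) (hαa n) (n + 1)
    · rw [← hb1]
      exact pow_le_pow_left₀ hα0 (hαb n) (n + 1)
  have hfloor : ∀ n : ℕ, ⌊α ^ (n + 1)⌋ = Jfun B M e n := by
    intro n
    rw [Int.floor_eq_iff]
    exact ⟨(hpow n).1, by push_cast; linarith [(hpow n).2]⟩
  refine ⟨α, ⟨?_, ?_⟩, ?_⟩
  · -- α ∈ Icc M (M+1)
    constructor
    · calc (M : ℝ) ≤ a 0 := aM_le hB hM e 0
        _ ≤ α := hαa 0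
    · have h0 : b 0 = (M : ℝ) + 1 / 2 := by
        rw [hb_def, bv]
        simp [Jfun]
      have := hαb 0
      rw [h0] at this
      linarith
  · -- fract bounds
    intro j hj
    obtain ⟨n, rfl⟩ : ∃ n, j = n + 1 := ⟨j - 1, by omega⟩
    rw [← Int.self_sub_floor, hfloor n]
    linarith [(hpow n).2]
  · -- digits
    intro n
    rw [digs, show n + 2 = (n + 1) + 1 by ring, hfloor (n + 1)]
    show (e n + B * _) % (B : ℤ) = e n
    rw [Int.add_mul_emod_self_left]
    exact Int.emod_eq_of_lt (he n).1 (he n).2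

end C3

lemma exists_digits {B : ℕ} (hB : 2 ≤ B) {y : ℝ} (hy : y ∈ Set.Ico (0 : ℝ) 1) :
    ∃ e : ℕ → ℤ, (∀ n, 0 ≤ e n ∧ e n < B) ∧
      (∑' n : ℕ, (e n : ℝ) / (B : ℝ) ^ (n + 1)) = y := by
  have hB0 : (0 : ℝ) < B := by exact_mod_cast (by omega : 0 < B)
  have hB1 : (1 : ℝ) < B := by exact_mod_cast (by omega : 1 < B)
  set e : ℕ → ℤ := fun n => ⌊(B : ℝ) ^ (n + 1) * y⌋ - B * ⌊(B : ℝ) ^ n * y⌋ with he_def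
  have hy0 : 0 ≤ y := hy.1
  have hy1 : y < 1 := hy.2
  have hbound : ∀ n, 0 ≤ e n ∧ e n < B := by
    intro n
    have hsucc : (B : ℝ) ^ (n + 1) * y = (B : ℝ) * ((B : ℝ) ^ n * y) := by ring
    constructor
    · have hd : e n = ⌊(B : ℝ) ^ (n + 1) * y⌋ - B * ⌊(B : ℝ) ^ n * y⌋ := rfl
      rw [hd, sub_nonneg, Int.le_floor]
      push_cast
      rw [hsucc]
      exact mul_le_mul_of_nonneg_left (Int.floor_le _) hB0.le
    · have : ⌊(B : ℝ) ^ (n + 1) * y⌋ < B * ⌊(B : ℝ) ^ n * y⌋ + B := by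
        rw [Int.floor_lt]
        push_cast
        rw [hsucc]
        have := Int.lt_floor_add_one ((B : ℝ) ^ n * y)
        nlinarith
      have hd : e n = ⌊(B : ℝ) ^ (n + 1) * y⌋ - B * ⌊(B : ℝ) ^ n * y⌋ := rfl
      omega
  refine ⟨e, hbound, ?_⟩
  -- partial sums
  have hpartial : ∀ N : ℕ, (∑ n ∈ Finset.range N, (e n : ℝ) / (B : ℝ) ^ (n + 1)) =
      (⌊(B : ℝ) ^ N * y⌋ : ℝ) / (B : ℝ) ^ N := by
    intro N
    induction N with
    | zero =>
      simp only [Finset.range_zero, Finset.sum_empty, pow_zero, one_mul]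
      rw [Int.floor_eq_zero_iff.mpr (by constructor <;> simp [hy0, hy1])]
      simp
    | succ N ih =>
      rw [Finset.sum_range_succ, ih,
        show ((e N : ℝ)) = ((⌊(B : ℝ) ^ (N + 1) * y⌋ : ℤ) : ℝ) - (B : ℝ) * ((⌊(B : ℝ) ^ N * y⌋ : ℤ) : ℝ) by push_cast [he_def]; ring]
      field_simp
      ring
  -- summability
  have hsummable : Summable (fun n : ℕ => (e n : ℝ) / (B : ℝ) ^ (n + 1)) := by
    apply Summable.of_nonneg_of_le
    · intro n
      apply div_nonneg _ (by positivity)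
      exact_mod_cast (hbound n).1
    · intro n
      show (e n : ℝ) / (B : ℝ) ^ (n + 1) ≤ (B : ℝ) * ((B : ℝ)⁻¹) ^ n
      have h1 : ((e n : ℝ)) ≤ (B : ℝ) := by exact_mod_cast (hbound n).2.le
      have hgeq : (B : ℝ) * ((B : ℝ)⁻¹) ^ n = (B : ℝ) / (B : ℝ) ^ n := by
        rw [inv_pow]; ring
      rw [hgeq]
      have h2 : (B : ℝ) ^ n ≤ (B : ℝ) ^ (n + 1) := by
        apply pow_le_pow_right₀ hB1.le (by omega)
      exact div_le_div₀ (by positivity) h1 (by positivity) h2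
    · exact (summable_geometric_of_lt_one (by positivity)
        (by rw [inv_lt_one_iff₀]; right; exact hB1)).mul_left _
  -- limit of partial sums is y
  have hlim : Filter.Tendsto (fun N => ∑ n ∈ Finset.range N, (e n : ℝ) / (B : ℝ) ^ (n + 1))
      Filter.atTop (nhds y) := by
    have hlow : ∀ N : ℕ, y - ((B : ℝ)⁻¹) ^ N ≤
        (∑ n ∈ Finset.range N, (e n : ℝ) / (B : ℝ) ^ (n + 1)) := by
      intro N
      rw [hpartial N]
      have h1 := Int.lt_floor_add_one ((B : ℝ) ^ N * y)
      have hpN : (0 : ℝ) < (B : ℝ) ^ N := by positivity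
      rw [sub_le_iff_le_add, div_add' _ _ _ hpN.ne', le_div_iff₀ hpN]
      have : ((B : ℝ)⁻¹) ^ N * (B : ℝ) ^ N = 1 := by
        rw [inv_pow, inv_mul_cancel₀ hpN.ne']
      nlinarith
    have hhigh : ∀ N : ℕ, (∑ n ∈ Finset.range N, (e n : ℝ) / (B : ℝ) ^ (n + 1)) ≤ y := by
      intro N
      rw [hpartial N]
      have h1 := Int.floor_le ((B : ℝ) ^ N * y)
      have hpN : (0 : ℝ) < (B : ℝ) ^ N := by positivity
      rw [div_le_iff₀ hpN]
      linarith
    have t1 : Filter.Tendsto (fun N : ℕ => y - ((B : ℝ)⁻¹) ^ N) Filter.atTop (nhds (y - 0)) := by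
      apply Filter.Tendsto.const_sub
      apply tendsto_pow_atTop_nhds_zero_of_lt_one (by positivity)
      rw [inv_lt_one_iff₀]; right; exact hB1
    rw [sub_zero] at t1
    exact tendsto_of_tendsto_of_tendsto_of_le_of_le t1 tendsto_const_nhds hlow hhigh
  have := hsummable.hasSum.tendsto_sum_nat
  exact tendsto_nhds_unique this hlim



lemma Eset_subset {M : ℕ} (hM : 2 ≤ M) :
    Eset M ⊆ {α : ℝ | 1 < α ∧ ¬ Set.Icc (0 : ℝ) 1 ⊆
      closure {x : ℝ | ∃ n : ℕ, 1 ≤ n ∧ x = Int.fract (α ^ n)}} := by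
  rintro α ⟨⟨h1, _⟩, hf⟩
  have hM2 : (2 : ℝ) ≤ (M : ℝ) := by exact_mod_cast hM
  refine ⟨by linarith, fun hsub => ?_⟩
  have h34 : (3 / 4 : ℝ) ∈ Set.Icc (0 : ℝ) 1 := by constructor <;> norm_num
  have hcl : closure {x : ℝ | ∃ n : ℕ, 1 ≤ n ∧ x = Int.fract (α ^ n)} ⊆ Set.Iic (1 / 2 : ℝ) := by
    apply closure_minimal _ isClosed_Iic
    rintro x ⟨n, hn, rfl⟩
    exact hf n hn
  have := hcl (hsub h34)
  rw [Set.mem_Iic] at this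
  norm_num at this

lemma surj_ff {B M : ℕ} (hB : 2 ≤ B) (hM : 2 * B + 1 ≤ M) :
    Set.Ico (0 : ℝ) 1 ⊆ ff B '' Eset M := by
  intro y hy
  obtain ⟨e, he, hsum⟩ := exists_digits hB hy
  obtain ⟨α, hα, hd⟩ := exists_alpha hB hM e he
  refine ⟨α, hα, ?_⟩
  rw [ff, ← hsum]
  exact tsum_congr fun n => by rw [hd n]

lemma dim_lower {B M : ℕ} (hB : 2 ≤ B) (hM : 2 * B + 1 ≤ M) {r : ℝ≥0} (hr0 : 0 < r)
    (hr1 : (r : ℝ) ≤ 1) (hq : ((M : ℝ) + 1) ^ (r : ℝ) < B) :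
    (r : ℝ≥0∞) ≤ dimH (Eset M) := by
  have hθ0 : (0 : ℝ) < (r : ℝ) := by exact_mod_cast hr0
  set C₀ : ℝ := 2 * B * ∑' n : ℕ,
    (((n : ℝ) + 2) * ((((M : ℝ) + 1) ^ (r : ℝ) / B) ^ (n + 1))) with hC₀
  have hC₀0 : 0 ≤ C₀ := by
    apply mul_nonneg (by positivity)
    apply tsum_nonneg
    intro n
    have hBpos : (0 : ℝ) < B := by exact_mod_cast (by omega : 0 < B)
    have : (0 : ℝ) ≤ ((M : ℝ) + 1) ^ (r : ℝ) := Real.rpow_nonneg (by positivity) _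
    positivity
  have hHolder : HolderOnWith C₀.toNNReal r (ff B) (Eset M) := by
    intro x hx y hy
    have hd := dist_ff_le (M := M) hB hθ0 hr1 hq hx hy
    calc edist (ff B x) (ff B y) = ENNReal.ofReal (dist (ff B x) (ff B y)) := edist_dist _ _
      _ ≤ ENNReal.ofReal (C₀ * dist x y ^ (r : ℝ)) := ENNReal.ofReal_le_ofReal hd
      _ = ENNReal.ofReal C₀ * ENNReal.ofReal (dist x y ^ (r : ℝ)) :=
          ENNReal.ofReal_mul hC₀0
      _ = (C₀.toNNReal : ℝ≥0∞) * ENNReal.ofReal (dist x y) ^ (r : ℝ) := by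
          rw [ENNReal.ofReal_rpow_of_nonneg dist_nonneg hθ0.le]
          rfl
      _ = (C₀.toNNReal : ℝ≥0∞) * edist x y ^ (r : ℝ) := by rw [← edist_dist]
  have himg : dimH (ff B '' Eset M) ≤ dimH (Eset M) / r := hHolder.dimH_image_le hr0
  have h1 : (1 : ℝ≥0∞) ≤ dimH (ff B '' Eset M) := by
    have hIco : dimH (Set.Ico (0 : ℝ) 1) = 1 := by
      rw [Real.dimH_of_nonempty_interior]
      · simp
      · rw [interior_Ico]
        exact Set.nonempty_Ioo.mpr (by norm_num)
    rw [← hIco]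
    exact dimH_mono (surj_ff hB hM)
  have h2 : (1 : ℝ≥0∞) ≤ dimH (Eset M) / r := le_trans h1 himg
  have h3 := (ENNReal.le_div_iff_mul_le (Or.inl (by exact_mod_cast hr0.ne'))
    (Or.inl ENNReal.coe_ne_top)).mp h2
  rwa [one_mul] at h3

lemma exists_params {θ : ℝ} (hθ0 : 0 < θ) (hθ1 : θ < 1) :
    ∃ B M : ℕ, 2 ≤ B ∧ 2 * B + 1 ≤ M ∧ ((M : ℝ) + 1) ^ θ < B := by
  have h1θ : 0 < 1 - θ := by linarith
  have htend : Filter.Tendsto (fun n : ℕ => ((n : ℝ) + 1)) Filter.atTop Filter.atTop :=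
    Filter.tendsto_atTop_add_const_right _ 1 tendsto_natCast_atTop_atTop
  have t1 : Filter.Tendsto (fun n : ℕ => ((n : ℝ) + 1) ^ (1 - θ)) Filter.atTop Filter.atTop :=
    (tendsto_rpow_atTop h1θ).comp htend
  have t2 : Filter.Tendsto (fun n : ℕ => ((n : ℝ) + 1) ^ θ) Filter.atTop Filter.atTop :=
    (tendsto_rpow_atTop hθ0).comp htend
  obtain ⟨M, hM1, hM2⟩ :=
    ((t1.eventually_ge_atTop 6).and (t2.eventually_ge_atTop 4)).exists
  set x : ℝ := (M : ℝ) + 1 with hx_def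
  have hx0 : (0 : ℝ) < x := by positivity
  set B : ℕ := ⌊x ^ θ⌋₊ + 1 with hB_def
  have hfl : x ^ θ < B := by
    rw [hB_def]
    push_cast
    exact Nat.lt_floor_add_one _
  have hBle : (B : ℝ) ≤ x ^ θ + 1 := by
    rw [hB_def]
    push_cast
    have := Nat.floor_le (Real.rpow_nonneg hx0.le θ : (0:ℝ) ≤ x ^ θ)
    linarith
  have hB2 : 2 ≤ B := by
    have : (1 : ℝ) ≤ x ^ θ := by linarith
    have h4 : 1 ≤ ⌊x ^ θ⌋₊ := Nat.le_floor (by exact_mod_cast this)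
    omega
  clear_value B
  have hxx : x ^ (1 - θ) * x ^ θ = x := by
    rw [← Real.rpow_add hx0]
    norm_num
  have hkey : 2 * x ^ θ + 4 ≤ x := by
    nlinarith
  have hMB : 2 * B + 1 ≤ M := by
    have : (2 * B + 1 : ℝ) ≤ (M : ℝ) := by
      push_cast
      have : (M : ℝ) = x - 1 := by rw [hx_def]; ring
      rw [this]
      linarith
    exact_mod_cast this
  exact ⟨B, M, hB2, hMB, hfl⟩

theorem stmt_17' :
    dimH {α : ℝ | 1 < α ∧ ¬ Set.Icc (0 : ℝ) 1 ⊆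
      closure {x : ℝ | ∃ n : ℕ, 1 ≤ n ∧ x = Int.fract (α ^ n)}} = 1 := by
  apply le_antisymm
  · exact (dimH_mono (Set.subset_univ _)).trans_eq Real.dimH_univ
  · apply ENNReal.le_of_forall_nnreal_lt
    intro r hr
    rcases eq_or_lt_of_le (show (0:ℝ≥0) ≤ r by positivity) with h0 | hr0
    · simp [← h0]
    have hr1 : (r : ℝ) < 1 := by exact_mod_cast hr
    obtain ⟨B, M, hB, hM, hq⟩ := exists_params (θ := (r : ℝ)) (by exact_mod_cast hr0) hr1
    have hsub : Eset M ⊆ _ := Eset_subset (by omega : 2 ≤ M)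
    exact le_trans (dim_lower hB hM hr0 hr1.le hq) (dimH_mono hsub)
end Stmt17

theorem stmt_17 :
    dimH {α : ℝ | 1 < α ∧ ¬ Set.Icc (0 : ℝ) 1 ⊆
      closure {x : ℝ | ∃ n : ℕ, 1 ≤ n ∧ x = Int.fract (α ^ n)}} = 1 :=
  Stmt17.stmt_17'
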